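/- If M^m ⊂ ℝⁿ (m > 2) satisfies S₂^i = f·g and its Gauss map is weakly conformal, then M is Einstein with Ric = ((|τ(i)|² − 2e(G))/m)·g, and f = ((4−m)/(2m))|τ(i)|². -/
import Mathlib


open scoped RealInnerProductSpace

/-- if `Mᵐ ⊂ ℝⁿ` (`m > 2`) satisfies `S₂^i = f g` and its Gauss map is
weakly conformal (`G*g_can = (2/m) e(G) g`), then `M` is Einstein with
`Ric = ((|τ(i)|² − 2 e(G))/m) g` and `f = ((4 − m)/(2m)) |τ(i)|²`.  The setting is modelled
pointwise over the points `p : M`, with `B` the second fundamental form, `H` the mean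
curvature, `τ = m H`, `Gpull = m⟨H,B⟩ − Ric`, `eG = (1/2) trace Gpull`, and
`S₂(X,Y) = −(1/2)|τ|²⟨X,Y⟩ + 2⟨τ, B(X,Y)⟩`. -/
theorem stmt_12 {V W : Type*}
    [NormedAddCommGroup V] [InnerProductSpace ℝ V]
    [NormedAddCommGroup W] [InnerProductSpace ℝ W]
    {M : Type*} {m : ℕ} (hm : 2 < m) (e : OrthonormalBasis (Fin m) ℝ V)
    (B : M → V →ₗ[ℝ] V →ₗ[ℝ] W) (hBsymm : ∀ p (X Y : V), B p X Y = B p Y X)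
    (H : M → W) (hH : ∀ p, H p = (m : ℝ)⁻¹ • ∑ i : Fin m, B p (e i) (e i))
    (τ : M → W) (hτ : ∀ p, τ p = (m : ℝ) • H p)
    (Ric : M → V → V → ℝ)
    (Gpull : M → V → V → ℝ)
    (hGpull : ∀ p (X Y : V), Gpull p X Y = (m : ℝ) * ⟪H p, B p X Y⟫ - Ric p X Y)
    (eG : M → ℝ) (heG : ∀ p, eG p = (1 / 2) * ∑ i : Fin m, Gpull p (e i) (e i))
    (S2 : M → V → V → ℝ)
    (hS2 : ∀ p (X Y : V), S2 p X Y
      = -(1 / 2) * ‖τ p‖ ^ 2 * ⟪X, Y⟫ + 2 * ⟪τ p, B p X Y⟫)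
    (f : M → ℝ) (hS2f : ∀ p (X Y : V), S2 p X Y = f p * ⟪X, Y⟫)
    (hconf : ∀ p (X Y : V), Gpull p X Y = (2 / (m : ℝ)) * eG p * ⟪X, Y⟫) :
    (∀ p (X Y : V), Ric p X Y = ((‖τ p‖ ^ 2 - 2 * eG p) / (m : ℝ)) * ⟪X, Y⟫)
    ∧ (∀ p, f p = ((4 - (m : ℝ)) / (2 * (m : ℝ))) * ‖τ p‖ ^ 2) := by
  have hm0 : (m : ℝ) ≠ 0 := by positivity
  -- trace of inner products
  have hτB : ∀ p (X Y : V), ⟪τ p, B p X Y⟫ = (m : ℝ) * ⟪H p, B p X Y⟫ := by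
    intro p X Y
    rw [hτ, real_inner_smul_left]
  have hkey : ∀ p (X Y : V),
      2 * ⟪τ p, B p X Y⟫ = (f p + ‖τ p‖ ^ 2 / 2) * ⟪X, Y⟫ := by
    intro p X Y
    have h1 := hS2 p X Y
    have h2 := hS2f p X Y
    rw [h2] at h1
    linarith [h1]
  have htrace : ∀ p, ∑ i : Fin m, ⟪τ p, B p (e i) (e i)⟫ = ‖τ p‖ ^ 2 := by
    intro p
    have hsum : ∑ i : Fin m, B p (e i) (e i) = (m : ℝ) • H p := by
      rw [hH, smul_smul, mul_inv_cancel₀ hm0, one_smul]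
    calc ∑ i : Fin m, ⟪τ p, B p (e i) (e i)⟫
        = ⟪τ p, ∑ i : Fin m, B p (e i) (e i)⟫ := (inner_sum _ _ _).symm
      _ = ⟪τ p, (m : ℝ) • H p⟫ := by rw [hsum]
      _ = ⟪τ p, τ p⟫ := by rw [← hτ]
      _ = ‖τ p‖ ^ 2 := real_inner_self_eq_norm_sq _
  have hee : ∀ i : Fin m, ⟪e i, e i⟫ = (1 : ℝ) := by
    intro i
    rw [real_inner_self_eq_norm_sq, e.orthonormal.1 i, one_pow]
  have hf : ∀ p, f p = ((4 - (m : ℝ)) / (2 * (m : ℝ))) * ‖τ p‖ ^ 2 := by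
    intro p
    have hsum : ∑ i : Fin m, (2 * ⟪τ p, B p (e i) (e i)⟫)
        = ∑ i : Fin m, ((f p + ‖τ p‖ ^ 2 / 2) * ⟪e i, e i⟫) := by
      exact Finset.sum_congr rfl fun i _ => hkey p (e i) (e i)
    rw [← Finset.mul_sum, htrace] at hsum
    have hsum2 : ∑ i : Fin m, ((f p + ‖τ p‖ ^ 2 / 2) * ⟪e i, e i⟫)
        = (f p + ‖τ p‖ ^ 2 / 2) * (m : ℝ) := by
      rw [← Finset.mul_sum]
      congr 1
      simp [hee]
    rw [hsum2] at hsum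
    field_simp
    nlinarith [hsum]
  refine ⟨?_, hf⟩
  intro p X Y
  have hR : Ric p X Y = ⟪τ p, B p X Y⟫ - (2 / (m : ℝ)) * eG p * ⟪X, Y⟫ := by
    have := hGpull p X Y
    rw [hconf p X Y] at this
    rw [← hτB] at this
    linarith
  have h2 := hkey p X Y
  have hfp := hf p
  rw [hR]
  have : ⟪τ p, B p X Y⟫ = ((f p + ‖τ p‖ ^ 2 / 2) / 2) * ⟪X, Y⟫ := by linarith
  rw [this, hfp]
  field_simp
  ring
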